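/- For every real symmetric positive-definite 2×2 matrix h with det h = 1, there exists a unique complex number μ with |μ| < 1 such that h = E(μ). Thus μ ↦ E(μ) is a bijection from the open unit disc onto the set of symmetric positive-definite unimodular real 2×2 matrices; i.e., every conformal 2-metric can be expressed in the μ-parametrization. -/

import Mathlib

/-- The conformal 2-metric parametrized by a complex number `μ` with `|μ| < 1`:
`E(μ) = (1 − |μ|²)⁻¹ · [[|1 + μ|², 2·Im μ], [2·Im μ, |1 − μ|²]]`. -/
noncomputable def conformalMetric (μ : ℂ) : Matrix (Fin 2) (Fin 2) ℝ :=
  (1 - ‖μ‖ ^ 2)⁻¹ •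
    !![‖1 + μ‖ ^ 2, 2 * μ.im; 2 * μ.im, ‖1 - μ‖ ^ 2]

set_option maxHeartbeats 2000000 in
/-- Every real symmetric positive-definite 2×2 matrix `h` with `det h = 1` equals
`E(μ)` for a unique complex `μ` in the open unit disc: `μ ↦ E(μ)` is a bijection from
the open unit disc onto the set of symmetric positive-definite unimodular real
2×2 matrices. -/
theorem conformalMetric_existsUnique (h : Matrix (Fin 2) (Fin 2) ℝ)
    (hsymm : h.IsSymm) (hpos : h.PosDef) (hdet : h.det = 1) :
    ∃! μ : ℂ, ‖μ‖ < 1 ∧ h = conformalMetric μ := by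
  set a := h 0 0 with ha
  set b := h 0 1 with hb
  set c := h 1 1 with hc
  have hsym : h 1 0 = b := by
    have := congrFun (congrFun hsymm.symm 1) 0
    simpa [Matrix.transpose_apply] using this
  have ha0 : 0 < a := by
    have hne : (Pi.single 0 1 : Fin 2 → ℝ) ≠ 0 := by
      intro hcon; simpa using congrFun hcon 0
    have := hpos.dotProduct_mulVec_pos hne
    simpa [dotProduct, Matrix.mulVec, Fin.sum_univ_two, Pi.single_apply] using this
  have hc0 : 0 < c := by
    have hne : (Pi.single 1 1 : Fin 2 → ℝ) ≠ 0 := by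
      intro hcon; simpa using congrFun hcon 1
    have := hpos.dotProduct_mulVec_pos hne
    simpa [dotProduct, Matrix.mulVec, Fin.sum_univ_two, Pi.single_apply] using this
  have hdet2 : a * c - b ^ 2 = 1 := by
    have := hdet
    rw [Matrix.det_fin_two, hsym] at this
    nlinarith [this]
  have hs : 0 < a + c + 2 := by linarith
  set s := a + c + 2 with hsdef
  have hsne : s ≠ 0 := ne_of_gt hs
  clear_value a b c s
  -- key simp lemmas about conformalMetric entries
  have centry : ∀ ν : ℂ,
      conformalMetric ν = (1 - (ν.re ^ 2 + ν.im ^ 2))⁻¹ •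
        !![(1 + ν.re) ^ 2 + ν.im ^ 2, 2 * ν.im; 2 * ν.im, (1 - ν.re) ^ 2 + ν.im ^ 2] := by
    intro ν
    have h1 : ‖ν‖ ^ 2 = ν.re ^ 2 + ν.im ^ 2 := by
      rw [Complex.sq_norm, Complex.normSq_apply]; ring
    have h2 : ‖1 + ν‖ ^ 2 = (1 + ν.re) ^ 2 + ν.im ^ 2 := by
      rw [Complex.sq_norm, Complex.normSq_apply]; simp; ring
    have h3 : ‖1 - ν‖ ^ 2 = (1 - ν.re) ^ 2 + ν.im ^ 2 := by
      rw [Complex.sq_norm, Complex.normSq_apply]; simp; ring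
    rw [conformalMetric, h1, h2, h3]
  set μ : ℂ := ⟨(a - c) / s, 2 * b / s⟩ with hμ
  have hμre : μ.re = (a - c) / s := rfl
  have hμim : μ.im = 2 * b / s := rfl
  clear_value μ
  have hkey : (a - c) ^ 2 + (2 * b) ^ 2 = s ^ 2 - 4 * s := by
    linear_combination (-4 : ℝ) * hdet2 - (s + a + c - 2) * hsdef
  have hnorm : μ.re ^ 2 + μ.im ^ 2 = 1 - 4 / s := by
    rw [hμre, hμim, div_pow, div_pow, ← add_div, hkey]
    field_simp
  have habs : ‖μ‖ < 1 := by
    have hsq : ‖μ‖ ^ 2 < 1 := by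
      rw [Complex.sq_norm, Complex.normSq_apply]
      have h4 : 0 < 4 / s := by positivity
      have : μ.re * μ.re + μ.im * μ.im = μ.re ^ 2 + μ.im ^ 2 := by ring
      rw [this, hnorm]; linarith
    nlinarith [norm_nonneg μ, hsq]
  have hden : 1 - (μ.re ^ 2 + μ.im ^ 2) = 4 / s := by rw [hnorm]; ring
  have heq : h = conformalMetric μ := by
    have hs2 : a + c + 2 ≠ 0 := by positivity
    have fa : (1 + μ.re) ^ 2 + μ.im ^ 2 = a * (4 / s) := by
      rw [hμre, hμim, hsdef]
      field_simp
      linear_combination (-4 : ℝ) * hdet2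
    have fb : 2 * μ.im = b * (4 / s) := by
      rw [hμim, hsdef]; field_simp; ring
    have fc : (1 - μ.re) ^ 2 + μ.im ^ 2 = c * (4 / s) := by
      rw [hμre, hμim, hsdef]
      field_simp
      linear_combination (-4 : ℝ) * hdet2
    rw [centry μ, hden, fa, fb, fc, Matrix.eta_fin_two h, hsym, ← ha, ← hb, ← hc]
    have h4s : (4 : ℝ) / s ≠ 0 := by positivity
    ext i j
    fin_cases i <;> fin_cases j <;>
      simp [Matrix.smul_apply, smul_eq_mul] <;> field_simp <;> ring
  refine ⟨μ, ⟨habs, heq⟩, ?_⟩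
  rintro ν ⟨hν, hνeq⟩
  have hce := centry ν
  set p := ν.re with hpdef
  set q := ν.im with hqdef
  have hd : 0 < 1 - (p ^ 2 + q ^ 2) := by
    have hsq : ‖ν‖ ^ 2 < 1 := by
      nlinarith [norm_nonneg ν]
    rw [Complex.sq_norm, Complex.normSq_apply] at hsq
    nlinarith [hsq]
  set d := 1 - (p ^ 2 + q ^ 2) with hddef
  have hdne : d ≠ 0 := ne_of_gt hd
  clear_value d p q
  have ea : a * d = (1 + p) ^ 2 + q ^ 2 := by
    have := congrFun (congrFun hνeq 0) 0
    rw [hce] at this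
    simp [Matrix.smul_apply, smul_eq_mul] at this
    rw [ha, this]
    field_simp
  have eb : b * d = 2 * q := by
    have := congrFun (congrFun hνeq 0) 1
    rw [hce] at this
    simp [Matrix.smul_apply, smul_eq_mul] at this
    rw [hb, this]
    field_simp
  have ec : c * d = (1 - p) ^ 2 + q ^ 2 := by
    have := congrFun (congrFun hνeq 1) 1
    rw [hce] at this
    simp [Matrix.smul_apply, smul_eq_mul] at this
    rw [hc, this]
    field_simp
  have hsd : s * d = 4 := by
    rw [hsdef]; linear_combination ea + ec + 2 * hddef
  have hdval : d = 4 / s := by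
    rw [eq_div_iff hsne]; linarith [hsd]
  have hp : p = (a - c) / s := by
    have h4 : (a - c) * d = 4 * p := by linear_combination ea - ec
    have hz : (p * s - (a - c)) * d = 0 := by linear_combination p * hsd - h4
    rcases mul_eq_zero.mp hz with hz | hz
    · rw [eq_div_iff hsne]; linarith
    · exact absurd hz hdne
  have hq : q = 2 * b / s := by
    have hz : (q * s - 2 * b) * d = 0 := by linear_combination q * hsd - 2 * eb
    rcases mul_eq_zero.mp hz with hz | hz
    · rw [eq_div_iff hsne]; linarith
    · exact absurd hz hdne
  apply Complex.ext
  · rw [hμre, ← hpdef]; exact hp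
  · rw [hμim, ← hqdef]; exact hq
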